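/- Let (X,d) be a metric space, μ a Borel measure on X, x₀ ∈ X, N > 1 and A ∈ (0,∞), and suppose lim_{ρ→0⁺} μ(B_ρ(x₀))/(ω_N ρ^N) = A. Then liminf_{λ→∞} λ^{N/2} ∫_X e^{−2λ d(x₀,x)²} dμ(x) ≥ (π/2)^{N/2} · A. -/

import Mathlib

open MeasureTheory Set Filter

/-- `ω_N = π^{N/2} / Γ(N/2 + 1)`, the volume of the unit ball in dimension `N`. -/
noncomputable def omegaN (N : ℝ) : ℝ := Real.pi ^ (N / 2) / Real.Gamma (N / 2 + 1)

lemma omegaN_pos {N : ℝ} (hN : 0 < N) : 0 < omegaN N := by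
  have h1 : (0:ℝ) < N / 2 + 1 := by linarith
  exact div_pos (Real.rpow_pos_of_pos Real.pi_pos _) (Real.Gamma_pos_of_pos h1)

lemma aux_image_exp_neg : (fun u : ℝ => Real.exp (-u)) '' Ioi 0 = Ioo (0:ℝ) 1 := by
  ext t
  simp only [mem_image, mem_Ioi, mem_Ioo]
  constructor
  · rintro ⟨u, hu, rfl⟩
    exact ⟨Real.exp_pos _, Real.exp_lt_one_iff.2 (by linarith)⟩
  · rintro ⟨h0, h1⟩
    exact ⟨-Real.log t, by simpa using Real.log_neg h0 h1, by simp [Real.exp_log h0]⟩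

lemma aux_gamma (s : ℝ) (hs : 0 < s) :
    ∫⁻ t in Ioo (0:ℝ) 1, ENNReal.ofReal ((-Real.log t) ^ s) =
      ENNReal.ofReal (Real.Gamma (s + 1)) := by
  have hderiv : ∀ u ∈ Ioi (0:ℝ),
      HasDerivWithinAt (fun u : ℝ => Real.exp (-u)) (-Real.exp (-u)) (Ioi 0) u := by
    intro u _
    simpa [Function.comp_def] using ((Real.hasDerivAt_exp (-u)).comp u ((hasDerivAt_neg u))).hasDerivWithinAt
  have hinj : InjOn (fun u : ℝ => Real.exp (-u)) (Ioi 0) :=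
    fun a _ b _ h => by
      have := Real.exp_injective h; linarith
  have himg := aux_image_exp_neg
  have hint : IntegrableOn (fun u : ℝ => Real.exp (-u) * u ^ s) (Ioi 0) := by
    have := Real.GammaIntegral_convergent (s := s + 1) (by linarith)
    simpa using this
  have heq : ∀ u ∈ Ioi (0:ℝ),
      |(-Real.exp (-u))| • (-Real.log (Real.exp (-u))) ^ s = Real.exp (-u) * u ^ s := by
    intro u _
    simp [abs_of_nonneg (Real.exp_pos (-u)).le, Real.log_exp, smul_eq_mul]
  have hch := integral_image_eq_integral_abs_deriv_smul measurableSet_Ioi hderiv hinj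
      (fun t => (-Real.log t) ^ s)
  rw [himg] at hch
  have hval : ∫ t in Ioo (0:ℝ) 1, (-Real.log t) ^ s = Real.Gamma (s + 1) := by
    rw [hch, setIntegral_congr_fun measurableSet_Ioi heq,
      Real.Gamma_eq_integral (by linarith : (0:ℝ) < s + 1)]
    norm_num
  have hintg : IntegrableOn (fun t => (-Real.log t) ^ s) (Ioo (0:ℝ) 1) := by
    rw [← himg]
    rw [integrableOn_image_iff_integrableOn_abs_deriv_smul measurableSet_Ioi hderiv hinj]
    exact hint.congr_fun (fun u hu => (heq u hu).symm) measurableSet_Ioi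
  rw [← ofReal_integral_eq_lintegral_ofReal hintg ?_, hval]
  · filter_upwards [ae_restrict_mem measurableSet_Ioo] with t ht
    exact Real.rpow_nonneg (by simpa using (Real.log_neg ht.1 ht.2).le) s

lemma aux_ball {X : Type*} [MetricSpace X] (x₀ : X) {lam t : ℝ} (hlam : 0 < lam)
    (ht : t ∈ Ioo (0:ℝ) 1) :
    {x : X | t < Real.exp (-2 * lam * dist x₀ x ^ 2)} =
      Metric.ball x₀ (Real.sqrt (-Real.log t / (2 * lam))) := by
  ext x
  simp only [mem_setOf_eq, Metric.mem_ball, dist_comm x x₀]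
  rw [← Real.log_lt_iff_lt_exp ht.1, Real.lt_sqrt dist_nonneg,
    lt_div_iff₀ (by positivity)]
  constructor <;> intro h <;> nlinarith

lemma aux_pointwise {X : Type*} [MetricSpace X] [MeasurableSpace X] [BorelSpace X]
    (μ : Measure X) (x₀ : X) (N A : ℝ) (hN : 1 < N) (hA : 0 < A)
    (hlim : Tendsto (fun ρ => (μ (Metric.ball x₀ ρ)).toReal / (omegaN N * ρ ^ N))
      (nhdsWithin 0 (Ioi 0)) (nhds A))
    (lam : ℕ → ℝ) (hlam : Tendsto lam atTop atTop) {t : ℝ} (ht : t ∈ Ioo (0:ℝ) 1) :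
    Tendsto (fun n => ENNReal.ofReal (lam n ^ (N/2)) *
        μ {x : X | t < Real.exp (-2 * lam n * dist x₀ x ^ 2)}) atTop
      (nhds (ENNReal.ofReal (A * (omegaN N * (-Real.log t / 2) ^ (N/2))))) := by
  have hω := omegaN_pos (by linarith : (0:ℝ) < N)
  have hL : 0 < -Real.log t := by simpa using Real.log_neg ht.1 ht.2
  set L := -Real.log t with hLdef
  set r : ℕ → ℝ := fun n => Real.sqrt (L / (2 * lam n)) with hrdef
  have hlampos : ∀ᶠ n in atTop, 0 < lam n := hlam.eventually_gt_atTop 0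
  have hr0 : Tendsto r atTop (nhds 0) := by
    have h1 : Tendsto (fun n => L / (2 * lam n)) atTop (nhds 0) :=
      Tendsto.div_atTop tendsto_const_nhds (hlam.const_mul_atTop two_pos)
    have := (Real.continuous_sqrt.tendsto 0).comp h1
    simpa [Function.comp_def] using this
  have hrpos : ∀ᶠ n in atTop, 0 < r n := by
    filter_upwards [hlampos] with n hn
    exact Real.sqrt_pos.2 (div_pos hL (by linarith))
  have hQ : Tendsto (fun n => (μ (Metric.ball x₀ (r n))).toReal / (omegaN N * r n ^ N))
      atTop (nhds A) := by
    refine hlim.comp (tendsto_nhdsWithin_iff.2 ⟨hr0, ?_⟩)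
    exact hrpos.mono fun n hn => hn
  have hpow : ∀ᶠ n in atTop, lam n ^ (N/2) * r n ^ N = (L/2) ^ (N/2) := by
    filter_upwards [hlampos] with n hn
    have hu : (0:ℝ) < L / (2 * lam n) := div_pos hL (by linarith)
    have h1 : r n ^ N = (L / (2 * lam n)) ^ (N/2) := by
      show Real.sqrt (L / (2 * lam n)) ^ N = _
      rw [Real.sqrt_eq_rpow, ← Real.rpow_mul hu.le]
      ring_nf
    have h2 : L / (2 * lam n) = (L / 2) / lam n := by ring
    rw [h1, h2, Real.div_rpow (by linarith : (0:ℝ) ≤ L/2) hn.le]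
    field_simp
  have hreal : Tendsto (fun n => lam n ^ (N/2) * (μ (Metric.ball x₀ (r n))).toReal)
      atTop (nhds (A * (omegaN N * (L/2) ^ (N/2)))) := by
    have h1 : Tendsto (fun n =>
        ((μ (Metric.ball x₀ (r n))).toReal / (omegaN N * r n ^ N)) * (omegaN N * (L/2) ^ (N/2)))
        atTop (nhds (A * (omegaN N * (L/2) ^ (N/2)))) := hQ.mul_const _
    refine h1.congr' ?_
    filter_upwards [hlampos, hrpos, hpow] with n hn hrn hpn
    have hden : omegaN N * r n ^ N ≠ 0 := by
      have := Real.rpow_pos_of_pos hrn N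
      positivity
    have hkey : omegaN N * (L/2) ^ (N/2) = lam n ^ (N/2) * (omegaN N * r n ^ N) := by
      rw [← hpn]; ring
    rw [hkey]
    field_simp
  have hfin : ∀ᶠ n in atTop, μ (Metric.ball x₀ (r n)) ≠ ⊤ := by
    have hevQ : ∀ᶠ n in atTop,
        0 < (μ (Metric.ball x₀ (r n))).toReal / (omegaN N * r n ^ N) :=
      hQ.eventually (eventually_gt_nhds hA)
    filter_upwards [hevQ] with n hn
    intro htop
    rw [htop] at hn
    simp at hn
  have hends : ∀ᶠ n in atTop,
      ENNReal.ofReal (lam n ^ (N/2)) * μ {x : X | t < Real.exp (-2 * lam n * dist x₀ x ^ 2)} =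
        ENNReal.ofReal (lam n ^ (N/2) * (μ (Metric.ball x₀ (r n))).toReal) := by
    filter_upwards [hlampos, hfin] with n hn hfn
    have hball : {x : X | t < Real.exp (-2 * lam n * dist x₀ x ^ 2)} =
        Metric.ball x₀ (r n) := aux_ball x₀ hn ht
    rw [hball, ENNReal.ofReal_mul (Real.rpow_nonneg hn.le _), ENNReal.ofReal_toReal hfn]
  exact Filter.Tendsto.congr' (hends.mono fun n h => h.symm)
    ((ENNReal.continuous_ofReal.tendsto _).comp hreal)

/-- If the small-ball density of `μ` at `x₀` tends to `A`, then
`liminf_{λ → ∞} λ^{N/2} ∫_X e^{-2λ d(x₀,x)²} dμ ≥ (π/2)^{N/2} A`. -/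
theorem gaussian_liminf_ge {X : Type*} [MetricSpace X] [MeasurableSpace X] [BorelSpace X]
    (μ : Measure X) (x₀ : X) (N A : ℝ) (hN : 1 < N) (hA : 0 < A)
    (hlim : Tendsto (fun ρ => (μ (Metric.ball x₀ ρ)).toReal / (omegaN N * ρ ^ N))
      (nhdsWithin 0 (Ioi 0)) (nhds A)) :
    ENNReal.ofReal ((Real.pi / 2) ^ (N / 2) * A) ≤
      liminf (fun lam : ℝ =>
          ENNReal.ofReal (lam ^ (N / 2)) *
            ∫⁻ x, ENNReal.ofReal (Real.exp (-2 * lam * dist x₀ x ^ 2)) ∂μ)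
        atTop := by
  have hω := omegaN_pos (by linarith : (0:ℝ) < N)
  have hΓ : 0 < Real.Gamma (N/2 + 1) := Real.Gamma_pos_of_pos (by linarith)
  have h2 : (0:ℝ) < (2:ℝ) ^ (N/2) := Real.rpow_pos_of_pos two_pos _
  set F : ℝ → ENNReal := fun lam =>
    ENNReal.ofReal (lam ^ (N / 2)) *
      ∫⁻ x, ENNReal.ofReal (Real.exp (-2 * lam * dist x₀ x ^ 2)) ∂μ with hFdef
  have hF : ∀ lam : ℝ, F lam = ∫⁻ t in Ioi (0:ℝ),
      ENNReal.ofReal (lam ^ (N/2)) *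
        μ {x : X | t < Real.exp (-2 * lam * dist x₀ x ^ 2)} := by
    intro lam
    show ENNReal.ofReal (lam ^ (N / 2)) *
        (∫⁻ x, ENNReal.ofReal (Real.exp (-2 * lam * dist x₀ x ^ 2)) ∂μ) = _
    have hm : AEMeasurable (fun x : X => Real.exp (-2 * lam * dist x₀ x ^ 2)) μ := by
      fun_prop
    rw [lintegral_eq_lintegral_meas_lt μ
      (Eventually.of_forall fun x => (Real.exp_pos _).le) hm,
      ← lintegral_const_mul' _ _ ENNReal.ofReal_ne_top]
  refine (le_liminf_iff (by isBoundedDefault) (by isBoundedDefault)).2 fun b hb => ?_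
  by_contra hcon
  rw [not_eventually] at hcon
  have hseq : ∀ n : ℕ, ∃ lam ≥ (n:ℝ), ¬ b < F lam := fun n => frequently_atTop.1 hcon n
  choose lam hlam1 hlam2 using hseq
  have hlam : Tendsto lam atTop atTop :=
    tendsto_atTop_mono hlam1 tendsto_natCast_atTop_atTop
  set g : ℕ → ℝ → ENNReal := fun n t => ENNReal.ofReal (lam n ^ (N/2)) *
      μ {x : X | t < Real.exp (-2 * lam n * dist x₀ x ^ 2)} with hgdef
  have hmeas : ∀ n, Measurable (g n) := by
    intro n
    refine Measurable.const_mul (Antitone.measurable fun t₁ t₂ h12 => ?_) _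
    exact measure_mono fun x hx => lt_of_le_of_lt h12 hx
  have hconst : A * omegaN N / 2 ^ (N/2) * Real.Gamma (N/2 + 1) =
      (Real.pi / 2) ^ (N/2) * A := by
    rw [Real.div_rpow Real.pi_pos.le (by norm_num : (0:ℝ) ≤ 2), omegaN]
    field_simp
  have key : ENNReal.ofReal ((Real.pi / 2) ^ (N / 2) * A) ≤
      liminf (fun n => F (lam n)) atTop := by
    have step1 : ∫⁻ t in Ioo (0:ℝ) 1,
        ENNReal.ofReal (A * (omegaN N * (-Real.log t / 2) ^ (N/2))) =
        ENNReal.ofReal ((Real.pi / 2) ^ (N / 2) * A) := by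
      have hptw : ∀ᵐ t ∂(volume : Measure ℝ), t ∈ Ioo (0:ℝ) 1 →
          ENNReal.ofReal (A * (omegaN N * (-Real.log t / 2) ^ (N/2))) =
            ENNReal.ofReal (A * omegaN N / 2 ^ (N/2)) *
              ENNReal.ofReal ((-Real.log t) ^ (N/2)) := by
        refine ae_of_all _ fun t ht => ?_
        have hLt : (0:ℝ) ≤ -Real.log t := by simpa using (Real.log_neg ht.1 ht.2).le
        rw [← ENNReal.ofReal_mul (by positivity),
          Real.div_rpow hLt (by norm_num : (0:ℝ) ≤ 2)]
        congr 1
        field_simp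
      rw [setLIntegral_congr_fun_ae measurableSet_Ioo hptw,
        lintegral_const_mul' _ _ ENNReal.ofReal_ne_top,
        aux_gamma (N/2) (by linarith),
        ← ENNReal.ofReal_mul (by positivity), hconst]
    calc ENNReal.ofReal ((Real.pi / 2) ^ (N / 2) * A)
        = ∫⁻ t in Ioo (0:ℝ) 1,
            ENNReal.ofReal (A * (omegaN N * (-Real.log t / 2) ^ (N/2))) := step1.symm
      _ = ∫⁻ t in Ioo (0:ℝ) 1, liminf (fun n => g n t) atTop := by
          refine setLIntegral_congr_fun measurableSet_Ioo (fun t ht => ?_)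
          exact ((aux_pointwise μ x₀ N A hN hA hlim lam hlam ht).liminf_eq).symm
      _ ≤ ∫⁻ t in Ioi (0:ℝ), liminf (fun n => g n t) atTop :=
          lintegral_mono_set Ioo_subset_Ioi_self
      _ ≤ liminf (fun n => ∫⁻ t in Ioi (0:ℝ), g n t) atTop :=
          lintegral_liminf_le hmeas
      _ = liminf (fun n => F (lam n)) atTop := by
          congr 1
          exact funext fun n => (hF (lam n)).symm
  have hle : liminf (fun n => F (lam n)) atTop ≤ b :=
    liminf_le_of_frequently_le' (Frequently.of_forall fun n => not_lt.1 (hlam2 n))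
  exact lt_irrefl b (hb.trans_le (key.trans hle))
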